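/- Let h(x) = x log x − x + 1 (with h(0) = 1) and let 0 < r ≤ 1 satisfy h(x) ≥ h(r) + (−h'(r)/(2r))·((max(2r−x,0))² − r²) for all x ∈ [0,1]. Then every symmetric measurable W : [0,1]² → [0,1] with t(K₃, W) ≤ r³ satisfies ∫∫ h(W(x,y)) dx dy ≥ h(r). -/

import Mathlib

open MeasureTheory Real

noncomputable section

def I01 : Set ℝ := Set.Icc 0 1

/-- Triangle density of a kernel `W`. -/
def tK3 (W : ℝ → ℝ → ℝ) : ℝ :=
  ∫ x in I01, ∫ y in I01, ∫ z in I01, W x y * W x z * W y z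

/-- The function `h(x) = x log x - x + 1` (with `h(0) = 1` since `Real.log 0 = 0`). -/
def hfun (x : ℝ) : ℝ := x * Real.log x - x + 1

abbrev myμ : Measure ℝ := volume.restrict I01

instance : IsProbabilityMeasure myμ := ⟨by simp [I01, Real.volume_Icc]⟩

lemma intbdd {α : Type*} [MeasurableSpace α] (ν : Measure α) [IsFiniteMeasure ν]
    {f : α → ℝ} (hf : AEStronglyMeasurable f ν) (C : ℝ) (hb : ∀ a, |f a| ≤ C) :
    Integrable f ν :=
  (integrable_const C).mono' hf (ae_of_all _ fun a => by simpa using hb a)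

lemma inner_meas {α : Type*} [MeasurableSpace α] (f : α × ℝ → ℝ) (hm : Measurable f) :
    Measurable fun a => ∫ y, f (a, y) ∂myμ :=
  hm.stronglyMeasurable.integral_prod_right'.measurable

lemma inner_bdd {α : Type*} (f : α × ℝ → ℝ) (a : α) (C : ℝ) (hb : ∀ q, |f q| ≤ C) :
    |∫ y, f (a, y) ∂myμ| ≤ C := by
  have := norm_integral_le_of_norm_le_const (μ := myμ) (f := fun y => f (a, y)) (C := C)
    (ae_of_all _ fun y => by simpa using hb (a, y))
  simpa using this

/-- convert a triple iterated integral to one over the triple product measure -/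
lemma trip_eq (g : ℝ × ℝ × ℝ → ℝ) (hm : Measurable g) (C : ℝ) (hb : ∀ q, |g q| ≤ C) :
    (∫ q, g q ∂(myμ.prod (myμ.prod myμ))) = ∫ x, ∫ y, ∫ z, g (x, y, z) ∂myμ ∂myμ ∂myμ := by
  rw [integral_prod _ (intbdd _ hm.aestronglyMeasurable C hb)]
  refine integral_congr_ae (ae_of_all _ fun x => ?_)
  exact integral_prod _ (intbdd _ ((hm.comp measurable_prodMk_left).aestronglyMeasurable) C
    (fun p => hb _))


/-- Cauchy-Schwarz for integrals. -/
lemma myCS {α : Type*} [MeasurableSpace α] (ν : Measure α) {f g : α → ℝ}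
    (hf2 : Integrable (fun a => f a ^ 2) ν) (hg2 : Integrable (fun a => g a ^ 2) ν)
    (hfg : Integrable (fun a => f a * g a) ν) :
    (∫ a, f a * g a ∂ν) ^ 2 ≤ (∫ a, f a ^ 2 ∂ν) * (∫ a, g a ^ 2 ∂ν) := by
  set A := ∫ a, f a ^ 2 ∂ν with hAdef
  set B := ∫ a, f a * g a ∂ν with hBdef
  set C := ∫ a, g a ^ 2 ∂ν with hCdef
  have key : ∀ t : ℝ, 0 ≤ A * (t * t) + 2 * B * t + C := by
    intro t
    have e1 : Integrable (fun a => t ^ 2 * f a ^ 2) ν := hf2.const_mul _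
    have e2 : Integrable (fun a => (2 * t) * (f a * g a)) ν := hfg.const_mul _
    have e12 : Integrable (fun a => t ^ 2 * f a ^ 2 + (2 * t) * (f a * g a)) ν := e1.add e2
    have h1 : 0 ≤ ∫ a, (t ^ 2 * f a ^ 2 + (2 * t) * (f a * g a)) + g a ^ 2 ∂ν := by
      refine le_of_le_of_eq (integral_nonneg (fun a => sq_nonneg (t * f a + g a)))
        (integral_congr_ae (ae_of_all _ fun a => by ring))
    rw [integral_add e12 hg2, integral_add e1 e2,
      integral_const_mul, integral_const_mul] at h1
    nlinarith [h1]
  have h := discrim_le_zero key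
  rw [discrim] at h
  nlinarith [h]

set_option maxHeartbeats 1000000 in
lemma core (r : ℝ) (hr0 : 0 < r) (U : ℝ → ℝ → ℝ)
    (hUm : Measurable (Function.uncurry U))
    (hU0 : ∀ x y, 0 ≤ U x y) (hU2 : ∀ x y, U x y ≤ 2 * r)
    (hUs : ∀ x y, U x y = U y x)
    (htri : (∫ x, ∫ y, ∫ z,
        (2*r - U x y) * (2*r - U x z) * (2*r - U y z) ∂myμ ∂myμ ∂myμ) ≤ r ^ 3) :
    r ^ 2 ≤ ∫ x, ∫ y, (U x y) ^ 2 ∂myμ ∂myμ := by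
  have hUm' : Measurable fun p : ℝ × ℝ => U p.1 p.2 := hUm
  have habs : ∀ x y, |U x y| ≤ 2 * r := fun x y =>
    abs_le.2 ⟨by linarith [hU0 x y], hU2 x y⟩
  have habs2 : ∀ x y, |U x y ^ 2| ≤ (2*r) ^ 2 := fun x y => by
    rw [abs_pow]
    exact pow_le_pow_left₀ (abs_nonneg _) (habs x y) 2
  -- the degree functions
  set d : ℝ → ℝ := fun x => ∫ y, U x y ∂myμ with hd_def
  set D : ℝ → ℝ := fun x => ∫ y, (U x y) ^ 2 ∂myμ with hD_def
  have hdm : Measurable d := inner_meas _ hUm'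
  have hDm : Measurable D := inner_meas _ (hUm'.pow_const 2)
  have hdb : ∀ x, |d x| ≤ 2 * r := fun x => inner_bdd _ _ _ (fun q => habs q.1 q.2)
  have hDb : ∀ x, |D x| ≤ (2*r) ^ 2 := fun x => inner_bdd _ _ _ (fun q => habs2 q.1 q.2)
  have hd0 : ∀ x, 0 ≤ d x := fun x => integral_nonneg (fun y => hU0 x y)
  have hD0 : ∀ x, 0 ≤ D x := fun x => integral_nonneg (fun y => sq_nonneg _)
  set s : ℝ := ∫ x, d x ∂myμ with hs_def
  set Q : ℝ := ∫ x, D x ∂myμ with hQ_def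
  set P : ℝ := ∫ x, d x ^ 2 ∂myμ with hP_def
  have int_d : Integrable d myμ := intbdd _ hdm.aestronglyMeasurable _ hdb
  have int_d2 : Integrable (fun x => d x ^ 2) myμ :=
    intbdd _ (hdm.pow_const 2).aestronglyMeasurable ((2*r)^2)
      (fun x => by rw [abs_pow]; exact pow_le_pow_left₀ (abs_nonneg _) (hdb x) 2)
  have int_D : Integrable D myμ := intbdd _ hDm.aestronglyMeasurable _ hDb
  have hs0 : 0 ≤ s := integral_nonneg hd0
  have hQ0 : 0 ≤ Q := integral_nonneg hD0
  -- sections of U are integrable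
  have sec_meas : ∀ x, Measurable fun y => U x y := fun x => hUm.of_uncurry_left
  have sec_meas' : ∀ y, Measurable fun x => U x y := fun y =>
    hUm'.comp (measurable_id.prodMk measurable_const)
  have int_sec : ∀ x, Integrable (fun y => U x y) myμ := fun x =>
    intbdd _ (sec_meas x).aestronglyMeasurable _ (habs x)
  have int_sec2 : ∀ x, Integrable (fun y => U x y ^ 2) myμ := fun x =>
    intbdd _ ((sec_meas x).pow_const 2).aestronglyMeasurable _ (fun y => habs2 x y)
  -- Cauchy-Schwarz pointwise: d x ^ 2 ≤ D x
  have hdD : ∀ x, d x ^ 2 ≤ D x := by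
    intro x
    have := myCS myμ (f := fun y => U x y) (g := fun _ => (1:ℝ)) (int_sec2 x)
      (by simpa using (integrable_const (1:ℝ))) (by simpa using int_sec x)
    simpa using this
  have hPQ : P ≤ Q := integral_mono int_d2 int_D hdD
  -- variance: s ^ 2 ≤ P
  have hsP : s ^ 2 ≤ P := by
    have := myCS myμ (f := d) (g := fun _ => (1:ℝ)) int_d2
      (by simpa using (integrable_const (1:ℝ))) (by simpa using int_d)
    simpa using this
  -- the three coordinate kernels on the triple product space
  set σ3 : Measure (ℝ × ℝ × ℝ) := myμ.prod (myμ.prod myμ) with hσ3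
  have m_a : Measurable fun q : ℝ × ℝ × ℝ => U q.1 q.2.1 :=
    hUm'.comp (measurable_fst.prodMk (measurable_fst.comp measurable_snd))
  have m_b : Measurable fun q : ℝ × ℝ × ℝ => U q.1 q.2.2 :=
    hUm'.comp (measurable_fst.prodMk (measurable_snd.comp measurable_snd))
  have m_c : Measurable fun q : ℝ × ℝ × ℝ => U q.2.1 q.2.2 :=
    hUm'.comp ((measurable_fst.comp measurable_snd).prodMk (measurable_snd.comp measurable_snd))
  have habs3 : (0:ℝ) ≤ 2*r := by linarith
  have habsmul : ∀ (x y z w : ℝ), |U x y * U z w| ≤ (2*r)*(2*r) := fun x y z w => by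
    rw [abs_mul]; exact mul_le_mul (habs _ _) (habs _ _) (abs_nonneg _) habs3
  have ia : Integrable (fun q : ℝ × ℝ × ℝ => U q.1 q.2.1) σ3 :=
    intbdd _ m_a.aestronglyMeasurable _ (fun q => habs _ _)
  have ib : Integrable (fun q : ℝ × ℝ × ℝ => U q.1 q.2.2) σ3 :=
    intbdd _ m_b.aestronglyMeasurable _ (fun q => habs _ _)
  have ic : Integrable (fun q : ℝ × ℝ × ℝ => U q.2.1 q.2.2) σ3 :=
    intbdd _ m_c.aestronglyMeasurable _ (fun q => habs _ _)
  have iab : Integrable (fun q : ℝ × ℝ × ℝ => U q.1 q.2.1 * U q.1 q.2.2) σ3 :=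
    intbdd _ (m_a.mul m_b).aestronglyMeasurable _ (fun q => habsmul _ _ _ _)
  have iac : Integrable (fun q : ℝ × ℝ × ℝ => U q.1 q.2.1 * U q.2.1 q.2.2) σ3 :=
    intbdd _ (m_a.mul m_c).aestronglyMeasurable _ (fun q => habsmul _ _ _ _)
  have ibc : Integrable (fun q : ℝ × ℝ × ℝ => U q.1 q.2.2 * U q.2.1 q.2.2) σ3 :=
    intbdd _ (m_b.mul m_c).aestronglyMeasurable _ (fun q => habsmul _ _ _ _)
  have iabc : Integrable (fun q : ℝ × ℝ × ℝ => U q.1 q.2.1 * U q.1 q.2.2 * U q.2.1 q.2.2) σ3 :=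
    intbdd _ ((m_a.mul m_b).mul m_c).aestronglyMeasurable ((2*r)*(2*r)*(2*r)) (fun q => by
      rw [abs_mul]
      exact mul_le_mul (habsmul _ _ _ _) (habs _ _) (abs_nonneg _)
        (by positivity))
  -- evaluation of the linear terms
  have EA : (∫ q, U q.1 q.2.1 ∂σ3) = s := by
    rw [hσ3, trip_eq _ m_a (2*r) (fun q => habs _ _)]
    calc (∫ x, ∫ y, ∫ z, U x y ∂myμ ∂myμ ∂myμ) = ∫ x, ∫ y, U x y ∂myμ ∂myμ := by
          refine integral_congr_ae (ae_of_all _ fun x => ?_)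
          refine integral_congr_ae (ae_of_all _ fun y => ?_)
          simp
      _ = s := rfl
  have EB : (∫ q, U q.1 q.2.2 ∂σ3) = s := by
    rw [hσ3, trip_eq _ m_b (2*r) (fun q => habs _ _)]
    calc (∫ x, ∫ y, ∫ z, U x z ∂myμ ∂myμ ∂myμ) = ∫ x, ∫ y, d x ∂myμ ∂myμ := rfl
      _ = ∫ x, d x ∂myμ := by
          refine integral_congr_ae (ae_of_all _ fun x => ?_); simp
      _ = s := rfl
  have EC : (∫ q, U q.2.1 q.2.2 ∂σ3) = s := by
    rw [hσ3, trip_eq _ m_c (2*r) (fun q => habs _ _)]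
    calc (∫ x, ∫ y, ∫ z, U y z ∂myμ ∂myμ ∂myμ) = ∫ x, ∫ y, d y ∂myμ ∂myμ := rfl
      _ = ∫ (x : ℝ), s ∂myμ := by
          refine integral_congr_ae (ae_of_all _ fun x => ?_); rfl
      _ = s := by simp
  -- quadratic terms
  have E4 : (∫ q, U q.1 q.2.1 * U q.1 q.2.2 ∂σ3) = P := by
    rw [hσ3, trip_eq (fun q => U q.1 q.2.1 * U q.1 q.2.2) (m_a.mul m_b) ((2*r)*(2*r)) (fun q => habsmul _ _ _ _)]
    calc (∫ x, ∫ y, ∫ z, U x y * U x z ∂myμ ∂myμ ∂myμ)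
        = ∫ x, ∫ y, U x y * d x ∂myμ ∂myμ := by
          refine integral_congr_ae (ae_of_all _ fun x => ?_)
          refine integral_congr_ae (ae_of_all _ fun y => ?_)
          exact integral_const_mul _ _
      _ = ∫ x, d x * d x ∂myμ := by
          refine integral_congr_ae (ae_of_all _ fun x => ?_)
          exact integral_mul_const _ _
      _ = P := by
          refine integral_congr_ae (ae_of_all _ fun x => ?_)
          exact (pow_two (d x)).symm
  have hcol : ∀ y, (∫ x, U x y ∂myμ) = d y := fun y => by
    calc (∫ x, U x y ∂myμ) = ∫ x, U y x ∂myμ :=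
          integral_congr_ae (ae_of_all _ fun x => hUs x y)
      _ = d y := rfl
  have hEswap : (∫ x, ∫ y, U x y * d y ∂myμ ∂myμ) = P := by
    have hint : Integrable (Function.uncurry fun x y => U x y * d y) (myμ.prod myμ) := by
      refine intbdd _ ((hUm'.mul (hdm.comp measurable_snd)).aestronglyMeasurable)
        ((2*r)*(2*r)) (fun p => ?_)
      rw [Function.uncurry]
      rw [abs_mul]
      exact mul_le_mul (habs _ _) (hdb _) (abs_nonneg _) habs3
    rw [integral_integral_swap hint]
    calc (∫ y, ∫ x, U x y * d y ∂myμ ∂myμ) = ∫ y, d y * d y ∂myμ := by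
          refine integral_congr_ae (ae_of_all _ fun y => ?_)
          show (∫ x, U x y * d y ∂myμ) = d y * d y
          rw [integral_mul_const, hcol]
      _ = P := by
          refine integral_congr_ae (ae_of_all _ fun y => ?_)
          exact (pow_two (d y)).symm
  have E5 : (∫ q, U q.1 q.2.1 * U q.2.1 q.2.2 ∂σ3) = P := by
    rw [hσ3, trip_eq (fun q => U q.1 q.2.1 * U q.2.1 q.2.2) (m_a.mul m_c) ((2*r)*(2*r)) (fun q => habsmul _ _ _ _)]
    calc (∫ x, ∫ y, ∫ z, U x y * U y z ∂myμ ∂myμ ∂myμ)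
        = ∫ x, ∫ y, U x y * d y ∂myμ ∂myμ := by
          refine integral_congr_ae (ae_of_all _ fun x => ?_)
          refine integral_congr_ae (ae_of_all _ fun y => ?_)
          exact integral_const_mul _ _
      _ = P := hEswap
  have E6 : (∫ q, U q.1 q.2.2 * U q.2.1 q.2.2 ∂σ3) = P := by
    rw [hσ3, trip_eq (fun q => U q.1 q.2.2 * U q.2.1 q.2.2) (m_b.mul m_c) ((2*r)*(2*r)) (fun q => habsmul _ _ _ _)]
    have inner6 : ∀ x, (∫ y, ∫ z, U x z * U y z ∂myμ ∂myμ) = ∫ y, U x y * d y ∂myμ := by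
      intro x
      have hint : Integrable (Function.uncurry fun y z => U x z * U y z) (myμ.prod myμ) := by
        refine intbdd _ (((hUm'.comp (measurable_const.prodMk measurable_snd)).mul
          hUm').aestronglyMeasurable) ((2*r)*(2*r)) (fun p => ?_)
        rw [Function.uncurry]
        exact habsmul _ _ _ _
      rw [integral_integral_swap hint]
      refine integral_congr_ae (ae_of_all _ fun z => ?_)
      show (∫ y, U x z * U y z ∂myμ) = U x z * d z
      rw [integral_const_mul, hcol]
    calc (∫ x, ∫ y, ∫ z, U x z * U y z ∂myμ ∂myμ ∂myμ)
        = ∫ x, ∫ y, U x y * d y ∂myμ ∂myμ := by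
          refine integral_congr_ae (ae_of_all _ fun x => ?_)
          exact inner6 x
      _ = P := hEswap
  -- the triangle term
  set T : ℝ := ∫ q, U q.1 q.2.1 * U q.1 q.2.2 * U q.2.1 q.2.2 ∂σ3 with hT_def
  have hT0 : 0 ≤ T := integral_nonneg fun q =>
    mul_nonneg (mul_nonneg (hU0 _ _) (hU0 _ _)) (hU0 _ _)
  set F : ℝ × ℝ → ℝ := fun p => ∫ x, U x p.1 * U x p.2 ∂myμ with hF_def
  have hFm : Measurable F := inner_meas (fun w : (ℝ × ℝ) × ℝ => U w.2 w.1.1 * U w.2 w.1.2)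
    ((hUm'.comp (measurable_snd.prodMk (measurable_fst.comp measurable_fst))).mul
      (hUm'.comp (measurable_snd.prodMk (measurable_snd.comp measurable_fst))))
  have hFb : ∀ p, |F p| ≤ (2*r)*(2*r) := fun p =>
    inner_bdd (fun w : (ℝ × ℝ) × ℝ => U w.2 w.1.1 * U w.2 w.1.2) p _
      (fun w => habsmul _ _ _ _)
  have int_ρU2 : Integrable (fun p : ℝ × ℝ => (U p.1 p.2) ^ 2) (myμ.prod myμ) :=
    intbdd _ (hUm'.pow_const 2).aestronglyMeasurable _ (fun p => habs2 _ _)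
  have int_ρF2 : Integrable (fun p => F p ^ 2) (myμ.prod myμ) :=
    intbdd _ (hFm.pow_const 2).aestronglyMeasurable (((2*r)*(2*r))^2)
      (fun p => by rw [abs_pow]; exact pow_le_pow_left₀ (abs_nonneg _) (hFb p) 2)
  have int_ρFU : Integrable (fun p : ℝ × ℝ => F p * U p.1 p.2) (myμ.prod myμ) :=
    intbdd _ (hFm.mul hUm').aestronglyMeasurable (((2*r)*(2*r))*(2*r))
      (fun p => by
        rw [abs_mul]
        exact mul_le_mul (hFb p) (habs _ _) (abs_nonneg _) (by positivity))
  have hTrep : T = ∫ p : ℝ × ℝ, F p * U p.1 p.2 ∂(myμ.prod myμ) := by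
    have h1 : T = ∫ x, ∫ p : ℝ × ℝ, U x p.1 * U x p.2 * U p.1 p.2 ∂(myμ.prod myμ) ∂myμ :=
      integral_prod _ iabc
    have hswap : Integrable (Function.uncurry fun x (p : ℝ × ℝ) =>
        U x p.1 * U x p.2 * U p.1 p.2) (myμ.prod (myμ.prod myμ)) := iabc
    have h2 : (∫ x, ∫ p : ℝ × ℝ, U x p.1 * U x p.2 * U p.1 p.2 ∂(myμ.prod myμ) ∂myμ)
        = ∫ p : ℝ × ℝ, ∫ x, U x p.1 * U x p.2 * U p.1 p.2 ∂myμ ∂(myμ.prod myμ) :=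
      integral_integral_swap hswap
    have h3 : (∫ p : ℝ × ℝ, ∫ x, U x p.1 * U x p.2 * U p.1 p.2 ∂myμ ∂(myμ.prod myμ))
        = ∫ p : ℝ × ℝ, F p * U p.1 p.2 ∂(myμ.prod myμ) := by
      refine integral_congr_ae (ae_of_all _ fun p => ?_)
      show (∫ x, U x p.1 * U x p.2 * U p.1 p.2 ∂myμ) = F p * U p.1 p.2
      rw [integral_mul_const]
    exact h1.trans (h2.trans h3)
  have hρQ : (∫ p : ℝ × ℝ, (U p.1 p.2) ^ 2 ∂(myμ.prod myμ)) = Q := by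
    have h1 : (∫ p : ℝ × ℝ, (U p.1 p.2) ^ 2 ∂(myμ.prod myμ))
        = ∫ y, ∫ z, U y z ^ 2 ∂myμ ∂myμ := integral_prod _ int_ρU2
    rw [h1]
  have hcol2 : ∀ y, (∫ x, U x y ^ 2 ∂myμ) = D y := fun y => by
    calc (∫ x, U x y ^ 2 ∂myμ) = ∫ x, U y x ^ 2 ∂myμ :=
          integral_congr_ae (ae_of_all _ fun x => congrArg (· ^ 2) (hUs x y))
      _ = D y := rfl
  have int_sec2' : ∀ y, Integrable (fun x => U x y ^ 2) myμ := fun y =>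
    intbdd _ ((sec_meas' y).pow_const 2).aestronglyMeasurable _ (fun x => habs2 x y)
  have int_secmul : ∀ p : ℝ × ℝ, Integrable (fun x => U x p.1 * U x p.2) myμ := fun p =>
    intbdd _ ((sec_meas' p.1).mul (sec_meas' p.2)).aestronglyMeasurable _
      (fun x => habsmul _ _ _ _)
  have hF2pt : ∀ p : ℝ × ℝ, F p ^ 2 ≤ D p.1 * D p.2 := fun p => by
    have h := myCS myμ (f := fun x => U x p.1) (g := fun x => U x p.2)
      (int_sec2' p.1) (int_sec2' p.2) (int_secmul p)
    rw [hcol2 p.1, hcol2 p.2] at h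
    exact h
  have int_DD : Integrable (fun p : ℝ × ℝ => D p.1 * D p.2) (myμ.prod myμ) :=
    intbdd _ ((hDm.comp measurable_fst).mul (hDm.comp measurable_snd)).aestronglyMeasurable
      ((2*r)^2*(2*r)^2) (fun p => by
        rw [abs_mul]
        exact mul_le_mul (hDb _) (hDb _) (abs_nonneg _) (by positivity))
  have hρF2 : (∫ p, F p ^ 2 ∂(myμ.prod myμ)) ≤ Q * Q := by
    calc (∫ p, F p ^ 2 ∂(myμ.prod myμ))
        ≤ ∫ p : ℝ × ℝ, D p.1 * D p.2 ∂(myμ.prod myμ) := integral_mono int_ρF2 int_DD hF2pt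
      _ = ∫ y, ∫ z, D y * D z ∂myμ ∂myμ := integral_prod _ int_DD
      _ = ∫ y, D y * Q ∂myμ := integral_congr_ae (ae_of_all _ fun y => integral_const_mul _ _)
      _ = Q * Q := integral_mul_const _ _
  have hT2 : T ^ 2 ≤ Q ^ 2 * Q := by
    have h := myCS (myμ.prod myμ) (f := F) (g := fun p : ℝ × ℝ => U p.1 p.2)
      int_ρF2 int_ρU2 int_ρFU
    calc T ^ 2 = (∫ p : ℝ × ℝ, F p * U p.1 p.2 ∂(myμ.prod myμ)) ^ 2 := by rw [hTrep]
      _ ≤ (∫ p, F p ^ 2 ∂(myμ.prod myμ)) * (∫ p : ℝ × ℝ, (U p.1 p.2) ^ 2 ∂(myμ.prod myμ)) := h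
      _ = (∫ p, F p ^ 2 ∂(myμ.prod myμ)) * Q := by rw [hρQ]
      _ ≤ (Q * Q) * Q := mul_le_mul_of_nonneg_right hρF2 hQ0
      _ = Q ^ 2 * Q := by ring
  -- expansion of the truncated kernel triple integral
  have intlin : Integrable (fun q : ℝ × ℝ × ℝ =>
      U q.1 q.2.1 + (U q.1 q.2.2 + U q.2.1 q.2.2)) σ3 := ia.add (ib.add ic)
  have intquad : Integrable (fun q : ℝ × ℝ × ℝ =>
      U q.1 q.2.1 * U q.1 q.2.2 + (U q.1 q.2.1 * U q.2.1 q.2.2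
        + U q.1 q.2.2 * U q.2.1 q.2.2)) σ3 := iab.add (iac.add ibc)
  have intB : Integrable (fun q : ℝ × ℝ × ℝ =>
      4*r^2 * (U q.1 q.2.1 + (U q.1 q.2.2 + U q.2.1 q.2.2))) σ3 := intlin.const_mul _
  have intC : Integrable (fun q : ℝ × ℝ × ℝ =>
      2*r * (U q.1 q.2.1 * U q.1 q.2.2 + (U q.1 q.2.1 * U q.2.1 q.2.2
        + U q.1 q.2.2 * U q.2.1 q.2.2))) σ3 := intquad.const_mul _
  have intAB : Integrable (fun q : ℝ × ℝ × ℝ =>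
      8*r^3 - 4*r^2 * (U q.1 q.2.1 + (U q.1 q.2.2 + U q.2.1 q.2.2))) σ3 :=
    (integrable_const _).sub intB
  have intABC : Integrable (fun q : ℝ × ℝ × ℝ =>
      8*r^3 - 4*r^2 * (U q.1 q.2.1 + (U q.1 q.2.2 + U q.2.1 q.2.2))
        + 2*r * (U q.1 q.2.1 * U q.1 q.2.2 + (U q.1 q.2.1 * U q.2.1 q.2.2
          + U q.1 q.2.2 * U q.2.1 q.2.2))) σ3 := intAB.add intC
  have ibc' : Integrable (fun q : ℝ × ℝ × ℝ => U q.1 q.2.2 + U q.2.1 q.2.2) σ3 := ib.add ic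
  have iacbc : Integrable (fun q : ℝ × ℝ × ℝ =>
      U q.1 q.2.1 * U q.2.1 q.2.2 + U q.1 q.2.2 * U q.2.1 q.2.2) σ3 := iac.add ibc
  have Econst : (∫ _q : ℝ × ℝ × ℝ, (8*r^3 : ℝ) ∂σ3) = 8*r^3 := by
    rw [hσ3]; simp
  have hexp : (∫ q : ℝ × ℝ × ℝ,
      (2*r - U q.1 q.2.1) * (2*r - U q.1 q.2.2) * (2*r - U q.2.1 q.2.2) ∂σ3)
      = 8*r^3 - 4*r^2*(s+(s+s)) + 2*r*(P+(P+P)) - T := by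
    have e1 : ∀ q : ℝ × ℝ × ℝ,
        (2*r - U q.1 q.2.1) * (2*r - U q.1 q.2.2) * (2*r - U q.2.1 q.2.2)
        = 8*r^3 - 4*r^2 * (U q.1 q.2.1 + (U q.1 q.2.2 + U q.2.1 q.2.2))
          + 2*r * (U q.1 q.2.1 * U q.1 q.2.2 + (U q.1 q.2.1 * U q.2.1 q.2.2
            + U q.1 q.2.2 * U q.2.1 q.2.2))
          - U q.1 q.2.1 * U q.1 q.2.2 * U q.2.1 q.2.2 := fun q => by ring
    rw [integral_congr_ae (ae_of_all _ e1), integral_sub intABC iabc,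
      integral_add intAB intC, integral_sub (integrable_const _) intB, Econst,
      integral_const_mul (4*r^2), integral_const_mul (2*r),
      integral_add ia ibc', integral_add ib ic,
      integral_add iab iacbc, integral_add iac ibc,
      EA, EB, EC, E4, E5, E6]
  -- the hypothesis, moved to the product space
  have habsV : ∀ x y, |2*r - U x y| ≤ 2*r := fun x y =>
    abs_le.2 ⟨by linarith [hU2 x y], by linarith [hU0 x y]⟩
  have mV : Measurable fun q : ℝ × ℝ × ℝ =>
      (2*r - U q.1 q.2.1) * (2*r - U q.1 q.2.2) * (2*r - U q.2.1 q.2.2) :=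
    ((measurable_const.sub m_a).mul (measurable_const.sub m_b)).mul (measurable_const.sub m_c)
  have htri' : (∫ q : ℝ × ℝ × ℝ,
      (2*r - U q.1 q.2.1) * (2*r - U q.1 q.2.2) * (2*r - U q.2.1 q.2.2) ∂σ3) ≤ r^3 := by
    rw [hσ3, trip_eq _ mV ((2*r)*(2*r)*(2*r)) (fun q => by
      rw [abs_mul, abs_mul]
      exact mul_le_mul (mul_le_mul (habsV _ _) (habsV _ _) (abs_nonneg _) habs3)
        (habsV _ _) (abs_nonneg _) (by positivity))]
    exact htri
  have hkey : 8*r^3 - 4*r^2*(s+(s+s)) + 2*r*(P+(P+P)) - T ≤ r^3 := by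
    rw [← hexp]; exact htri'
  -- final algebra
  clear_value T F
  clear hTrep hT_def hF_def
  set q' : ℝ := Real.sqrt Q with hq'def
  have hq0 : 0 ≤ q' := Real.sqrt_nonneg _
  have hqq : q' ^ 2 = Q := Real.sq_sqrt hQ0
  have hsq : s ≤ q' := by nlinarith [hsP, hPQ, hqq, hs0, hq0]
  have hTq : T ≤ q' ^ 3 := by
    have h6 : Q ^ 2 * Q = (q' ^ 3) ^ 2 := by rw [← hqq]; ring
    nlinarith [hT2, hT0, hq0, h6, pow_nonneg hq0 3]
  have hrq : r ≤ q' := by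
    by_contra hlt
    push_neg at hlt
    have e1 : 0 ≤ 6*r*((q' - s) * (2*r - s - q')) :=
      mul_nonneg (by linarith) (mul_nonneg (by linarith) (by linarith))
    have e2 : 0 < (r - q') * ((q' - 5*r/2)^2 + 3*r^2/4) :=
      mul_pos (by linarith) (by positivity)
    have e3 : 0 ≤ 6*r*(P - s^2) := mul_nonneg (by linarith) (by linarith)
    nlinarith [hkey, hTq, e1, e2, e3]
  calc r ^ 2 ≤ q' ^ 2 := pow_le_pow_left₀ hr0.le hrq 2
    _ = Q := hqq

lemma hfun_meas : Measurable (fun x : ℝ => x * Real.log x - x + 1) :=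
  ((measurable_id.mul Real.measurable_log).sub measurable_id).add measurable_const

lemma hfun_bdd : ∀ w ∈ Set.Icc (0:ℝ) 1, |w * Real.log w - w + 1| ≤ 2 := by
  intro w hw
  obtain ⟨h0, h1⟩ := hw
  have hup : w * Real.log w ≤ 0 := by nlinarith [Real.log_nonpos h0 h1]
  have hlow : w - 1 ≤ w * Real.log w := by
    rcases eq_or_lt_of_le h0 with rfl | hw0
    · simp
    · have h := Real.log_le_sub_one_of_pos (inv_pos.2 hw0)
      rw [Real.log_inv] at h
      have h2 : 1 - w⁻¹ ≤ Real.log w := by linarith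
      have h3 : w * (1 - w⁻¹) ≤ w * Real.log w := mul_le_mul_of_nonneg_left h2 h0
      have h4 : w * (1 - w⁻¹) = w - 1 := by field_simp
      linarith
  exact abs_le.2 ⟨by linarith, by linarith⟩

lemma mono_trip (f g : ℝ → ℝ → ℝ) (hf : Measurable (Function.uncurry f))
    (hg : Measurable (Function.uncurry g)) (C : ℝ)
    (h0 : ∀ x y, 0 ≤ f x y) (hfg : ∀ x y, f x y ≤ g x y) (hgC : ∀ x y, g x y ≤ C) :
    (∫ x, ∫ y, ∫ z, f x y * f x z * f y z ∂myμ ∂myμ ∂myμ)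
      ≤ ∫ x, ∫ y, ∫ z, g x y * g x z * g y z ∂myμ ∂myμ ∂myμ := by
  have hf' : Measurable fun p : ℝ × ℝ => f p.1 p.2 := hf
  have hg' : Measurable fun p : ℝ × ℝ => g p.1 p.2 := hg
  have hg0 : ∀ x y, 0 ≤ g x y := fun x y => le_trans (h0 x y) (hfg x y)
  have hC0 : (0:ℝ) ≤ C := le_trans (hg0 0 0) (hgC 0 0)
  have hfC : ∀ x y, |f x y| ≤ C := fun x y =>
    abs_le.2 ⟨by linarith [h0 x y], le_trans (hfg x y) (hgC x y)⟩
  have hgCa : ∀ x y, |g x y| ≤ C := fun x y =>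
    abs_le.2 ⟨by linarith [hg0 x y], hgC x y⟩
  have mf : Measurable fun q : ℝ × ℝ × ℝ => f q.1 q.2.1 * f q.1 q.2.2 * f q.2.1 q.2.2 :=
    ((hf'.comp (measurable_fst.prodMk (measurable_fst.comp measurable_snd))).mul
      (hf'.comp (measurable_fst.prodMk (measurable_snd.comp measurable_snd)))).mul
      (hf'.comp ((measurable_fst.comp measurable_snd).prodMk
        (measurable_snd.comp measurable_snd)))
  have mg : Measurable fun q : ℝ × ℝ × ℝ => g q.1 q.2.1 * g q.1 q.2.2 * g q.2.1 q.2.2 :=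
    ((hg'.comp (measurable_fst.prodMk (measurable_fst.comp measurable_snd))).mul
      (hg'.comp (measurable_fst.prodMk (measurable_snd.comp measurable_snd)))).mul
      (hg'.comp ((measurable_fst.comp measurable_snd).prodMk
        (measurable_snd.comp measurable_snd)))
  have bndf : ∀ q : ℝ × ℝ × ℝ, |f q.1 q.2.1 * f q.1 q.2.2 * f q.2.1 q.2.2| ≤ C*C*C := fun q => by
    rw [abs_mul, abs_mul]
    exact mul_le_mul (mul_le_mul (hfC _ _) (hfC _ _) (abs_nonneg _) hC0) (hfC _ _)
      (abs_nonneg _) (by positivity)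
  have bndg : ∀ q : ℝ × ℝ × ℝ, |g q.1 q.2.1 * g q.1 q.2.2 * g q.2.1 q.2.2| ≤ C*C*C := fun q => by
    rw [abs_mul, abs_mul]
    exact mul_le_mul (mul_le_mul (hgCa _ _) (hgCa _ _) (abs_nonneg _) hC0) (hgCa _ _)
      (abs_nonneg _) (by positivity)
  rw [← trip_eq (fun q => f q.1 q.2.1 * f q.1 q.2.2 * f q.2.1 q.2.2) mf (C*C*C) bndf,
    ← trip_eq (fun q => g q.1 q.2.1 * g q.1 q.2.2 * g q.2.1 q.2.2) mg (C*C*C) bndg]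
  refine integral_mono (intbdd _ mf.aestronglyMeasurable _ bndf)
    (intbdd _ mg.aestronglyMeasurable _ bndg) (fun q => ?_)
  exact mul_le_mul (mul_le_mul (hfg _ _) (hfg _ _) (h0 _ _) (hg0 _ _)) (hfg _ _) (h0 _ _)
    (mul_nonneg (hg0 _ _) (hg0 _ _))


set_option maxHeartbeats 1000000 in
theorem stmt_6 (r : ℝ) (hr0 : 0 < r) (hr1 : r ≤ 1)
    (htangent : ∀ x ∈ Set.Icc (0 : ℝ) 1,
      hfun x ≥ hfun r + (-Real.log r / (2 * r)) * ((max (2 * r - x) 0) ^ 2 - r ^ 2))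
    (W : ℝ → ℝ → ℝ)
    (hrange : ∀ x y, W x y ∈ Set.Icc (0 : ℝ) 1)
    (hsymm : ∀ x y, W x y = W y x)
    (hmeas : Measurable (Function.uncurry W))
    (ht : tK3 W ≤ r ^ 3) :
    (∫ x in I01, ∫ y in I01, hfun (W x y)) ≥ hfun r := by
  have hW0 : ∀ x y, 0 ≤ W x y := fun x y => (hrange x y).1
  have hW1 : ∀ x y, W x y ≤ 1 := fun x y => (hrange x y).2
  set U : ℝ → ℝ → ℝ := fun x y => max (2*r - W x y) 0 with hU_def
  have hU0 : ∀ x y, 0 ≤ U x y := fun x y => le_max_right _ _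
  have hU2 : ∀ x y, U x y ≤ 2*r := fun x y =>
    max_le (by linarith [hW0 x y]) (by linarith)
  have hUs : ∀ x y, U x y = U y x := fun x y => by
    show max (2*r - W x y) 0 = max (2*r - W y x) 0
    rw [hsymm x y]
  have hUm : Measurable (Function.uncurry U) :=
    (measurable_const.sub hmeas).max measurable_const
  have hUm' : Measurable (fun p : ℝ × ℝ => U p.1 p.2) := hUm
  have habs2 : ∀ x y, |U x y ^ 2| ≤ (2*r) ^ 2 := fun x y => by
    rw [abs_pow]
    refine pow_le_pow_left₀ (abs_nonneg _) (abs_le.2 ⟨by linarith [hU0 x y], hU2 x y⟩) 2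
  -- V := 2r - U is below W
  have hVf : ∀ x y, 0 ≤ 2*r - U x y := fun x y => by linarith [hU2 x y]
  have hVW : ∀ x y, 2*r - U x y ≤ W x y := fun x y => by
    have h := le_max_left (2*r - W x y) 0
    have : 2*r - W x y ≤ U x y := h
    linarith
  have hVm : Measurable (Function.uncurry fun x y => 2*r - U x y) :=
    measurable_const.sub hUm
  have htri : (∫ x, ∫ y, ∫ z,
      (2*r - U x y) * (2*r - U x z) * (2*r - U y z) ∂myμ ∂myμ ∂myμ) ≤ r^3 :=
    le_trans (mono_trip (fun x y => 2*r - U x y) W hVm hmeas 1 hVf hVW hW1) ht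
  have hQ := core r hr0 U hUm hU0 hU2 hUs htri
  -- tangent inequality
  set c : ℝ := -Real.log r / (2 * r) with hc_def
  have hc0 : 0 ≤ c :=
    div_nonneg (neg_nonneg.2 (Real.log_nonpos hr0.le hr1)) (by linarith)
  have pw : ∀ x y, hfun r + c * ((U x y)^2 - r^2) ≤ hfun (W x y) := fun x y =>
    htangent _ (hrange x y)
  -- integrability data
  have hfWm : Measurable (fun p : ℝ × ℝ => hfun (W p.1 p.2)) := hfun_meas.comp hmeas
  have hfWb : ∀ p : ℝ × ℝ, |hfun (W p.1 p.2)| ≤ 2 := fun p => hfun_bdd _ (hrange _ _)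
  have int_fW : ∀ x, Integrable (fun y => hfun (W x y)) myμ := fun x =>
    intbdd _ ((hfWm.comp measurable_prodMk_left).aestronglyMeasurable) 2
      (fun y => hfWb (x, y))
  have int_U2 : ∀ x, Integrable (fun y => (U x y)^2) myμ := fun x =>
    intbdd _ (((hUm'.comp measurable_prodMk_left)).pow_const 2).aestronglyMeasurable
      ((2*r)^2) (fun y => habs2 x y)
  have step1 : ∀ x, hfun r + c * ((∫ y, (U x y)^2 ∂myμ) - r^2) ≤ ∫ y, hfun (W x y) ∂myμ := by
    intro x
    have i1 : Integrable (fun y => (U x y)^2 - r^2) myμ := (int_U2 x).sub (integrable_const _)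
    have i2 : Integrable (fun y => c * ((U x y)^2 - r^2)) myμ := i1.const_mul c
    have e : (∫ y, hfun r + c * ((U x y)^2 - r^2) ∂myμ)
        = hfun r + c * ((∫ y, (U x y)^2 ∂myμ) - r^2) := by
      rw [integral_add (integrable_const _) i2, integral_const, integral_const_mul c,
        integral_sub (int_U2 x) (integrable_const _), integral_const]
      simp
    rw [← e]
    exact integral_mono ((integrable_const _).add i2) (int_fW x) (fun y => pw x y)
  -- outer integration
  have hDm : Measurable (fun x => ∫ y, (U x y)^2 ∂myμ) :=
    inner_meas (fun p : ℝ × ℝ => (U p.1 p.2)^2) (hUm'.pow_const 2)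
  have hDb : ∀ x, |∫ y, (U x y)^2 ∂myμ| ≤ (2*r)^2 := fun x =>
    inner_bdd (fun p : ℝ × ℝ => (U p.1 p.2)^2) x _ (fun p => habs2 p.1 p.2)
  have int_D : Integrable (fun x => ∫ y, (U x y)^2 ∂myμ) myμ :=
    intbdd _ hDm.aestronglyMeasurable _ hDb
  have hGm : Measurable (fun x => ∫ y, hfun (W x y) ∂myμ) :=
    inner_meas (fun p : ℝ × ℝ => hfun (W p.1 p.2)) hfWm
  have int_G : Integrable (fun x => ∫ y, hfun (W x y) ∂myμ) myμ :=
    intbdd _ hGm.aestronglyMeasurable 2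
      (fun x => inner_bdd (fun p : ℝ × ℝ => hfun (W p.1 p.2)) x 2 hfWb)
  have step2 : hfun r + c * ((∫ x, ∫ y, (U x y)^2 ∂myμ ∂myμ) - r^2)
      ≤ ∫ x, ∫ y, hfun (W x y) ∂myμ ∂myμ := by
    have i1 : Integrable (fun x => (∫ y, (U x y)^2 ∂myμ) - r^2) myμ :=
      int_D.sub (integrable_const _)
    have i2 : Integrable (fun x => c * ((∫ y, (U x y)^2 ∂myμ) - r^2)) myμ := i1.const_mul c
    have e : (∫ x, hfun r + c * ((∫ y, (U x y)^2 ∂myμ) - r^2) ∂myμ)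
        = hfun r + c * ((∫ x, ∫ y, (U x y)^2 ∂myμ ∂myμ) - r^2) := by
      rw [integral_add (integrable_const _) i2, integral_const, integral_const_mul c,
        integral_sub int_D (integrable_const _), integral_const]
      simp
    rw [← e]
    exact integral_mono ((integrable_const _).add i2) int_G step1
  have hfinal : hfun r ≤ hfun r + c * ((∫ x, ∫ y, (U x y)^2 ∂myμ ∂myμ) - r^2) := by
    nlinarith [mul_nonneg hc0 (sub_nonneg.2 hQ)]
  exact le_trans hfinal step2
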